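/- Key ellipticity lemma for σ_k-type operators: Let 1 ≤ k ≤ n−1. There exists a positive constant c_{n,k} depending only on n and k such that the following holds. Let λ = (λ_1,…,λ_n) ∈ ℝⁿ with λ_1 ≥ ⋯ ≥ λ_n, set η_i = Σ_{j=1}^n λ_j − λ_i (so that η_1 ≤ ⋯ ≤ η_n), and assume η ∈ Γ_k. Define f_i = (1/k) · σ_k(η)^{(1/k)−1} · Σ_{l≠i} σ_{k−1}(η|l) for 1 ≤ i ≤ n. Then f_1 ≥ c_{n,k} · Σ_{i=1}^n f_i (note f_1 = min_i f_i and each f_i ≥ 0). -/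

import Mathlib

set_option maxHeartbeats 1000000

open Finset

set_option linter.unusedSectionVars false
variable {ι : Type*} [DecidableEq ι]

/-- elementary symmetric function of `x` restricted to index set `s`. -/
noncomputable def ES (x : ι → ℝ) (j : ℕ) (s : Finset ι) : ℝ :=
  ∑ t ∈ s.powersetCard j, ∏ i ∈ t, x i

lemma ES_zero (x : ι → ℝ) (s : Finset ι) : ES x 0 s = 1 := by
  simp [ES, Finset.powersetCard_zero]

lemma ES_of_card_lt {x : ι → ℝ} {j : ℕ} {s : Finset ι} (h : s.card < j) : ES x j s = 0 := by
  rw [ES, Finset.powersetCard_eq_empty.2 h, Finset.sum_empty]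

lemma ES_nonneg {x : ι → ℝ} {j : ℕ} {s : Finset ι} (h : ∀ i ∈ s, 0 ≤ x i) : 0 ≤ ES x j s := by
  apply Finset.sum_nonneg
  intro t ht
  rw [Finset.mem_powersetCard] at ht
  exact Finset.prod_nonneg fun i hi => h i (ht.1 hi)

lemma ES_pos {x : ι → ℝ} {j : ℕ} {s : Finset ι} (h : ∀ i ∈ s, 0 < x i) (hj : j ≤ s.card) :
    0 < ES x j s := by
  apply Finset.sum_pos
  · intro t ht
    rw [Finset.mem_powersetCard] at ht
    exact Finset.prod_pos fun i hi => h i (ht.1 hi)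
  · exact Finset.powersetCard_nonempty.2 hj

/-- Expansion of `ES` by deleting one index. -/
lemma ES_erase (x : ι → ℝ) (j : ℕ) {s : Finset ι} {p : ι} (hp : p ∈ s) :
    ES x (j+1) s = ES x (j+1) (s.erase p) + x p * ES x j (s.erase p) := by
  have h1 : s = insert p (s.erase p) := (Finset.insert_erase hp).symm
  have h2 : p ∉ s.erase p := Finset.notMem_erase p s
  rw [ES]
  nth_rewrite 1 [h1]
  rw [Finset.powersetCard_succ_insert h2, Finset.sum_union]
  · have hinj : ∀ t ∈ (s.erase p).powersetCard j, ∀ u ∈ (s.erase p).powersetCard j,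
        insert p t = insert p u → t = u := by
      intro t ht u hu he
      rw [Finset.mem_powersetCard] at ht hu
      have hpt : p ∉ t := fun hc => h2 (ht.1 hc)
      have hpu : p ∉ u := fun hc => h2 (hu.1 hc)
      rw [← Finset.erase_insert hpt, ← Finset.erase_insert hpu, he]
    rw [Finset.sum_image hinj]
    congr 1
    rw [ES, Finset.mul_sum]
    apply Finset.sum_congr rfl
    intro t ht
    rw [Finset.mem_powersetCard] at ht
    rw [Finset.prod_insert (fun hc => h2 (ht.1 hc))]
  · rw [Finset.disjoint_right]
    intro t ht hmem
    rw [Finset.mem_image] at ht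
    obtain ⟨u, hu, rfl⟩ := ht
    rw [Finset.mem_powersetCard] at hmem
    exact h2 (hmem.1 (Finset.mem_insert_self p u))

/-- Double counting: weighted sum over single deletions. -/
lemma ES_weighted_sum (x : ι → ℝ) (j : ℕ) (s : Finset ι) :
    ∑ p ∈ s, x p * ES x j (s.erase p) = (j+1 : ℕ) * ES x (j+1) s := by
  have hrhs : ((j+1 : ℕ) : ℝ) * ES x (j+1) s
      = ∑ v ∈ s.powersetCard (j+1), ∑ p ∈ v, x p * ∏ i ∈ v.erase p, x i := by
    rw [ES, Finset.mul_sum]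
    apply Finset.sum_congr rfl
    intro v hv
    rw [Finset.mem_powersetCard] at hv
    have : ∀ p ∈ v, x p * ∏ i ∈ v.erase p, x i = ∏ i ∈ v, x i := by
      intro p hp; exact Finset.mul_prod_erase v x hp
    rw [Finset.sum_congr rfl this, Finset.sum_const, nsmul_eq_mul, hv.2]
  rw [hrhs]
  simp only [ES, Finset.mul_sum]
  rw [Finset.sum_sigma', Finset.sum_sigma']
  apply Finset.sum_nbij' (i := fun q => (⟨insert q.1 q.2, q.1⟩ : Σ _ : Finset ι, ι))
    (j := fun q => (⟨q.2, q.1.erase q.2⟩ : Σ _ : ι, Finset ι))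
  · rintro ⟨p, t⟩ hq
    rw [Finset.mem_sigma, Finset.mem_powersetCard] at hq
    have hps := hq.1
    have hts := hq.2.1
    have htc := hq.2.2
    have hpt : p ∉ t := fun hc => Finset.notMem_erase p s (hts hc)
    rw [Finset.mem_sigma, Finset.mem_powersetCard]
    constructor
    · constructor
      · exact Finset.insert_subset hps ((hts.trans (Finset.erase_subset p s)))
      · rw [Finset.card_insert_of_notMem hpt, htc]
    · exact Finset.mem_insert_self p t
  · rintro ⟨v, p⟩ hq
    rw [Finset.mem_sigma, Finset.mem_powersetCard] at hq
    rw [Finset.mem_sigma]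
    refine ⟨hq.1.1 hq.2, Finset.mem_powersetCard.2 ⟨?_, ?_⟩⟩
    · intro a ha
      rw [Finset.mem_erase] at ha
      exact Finset.mem_erase.2 ⟨ha.1, hq.1.1 ha.2⟩
    · rw [Finset.card_erase_of_mem hq.2, hq.1.2]; omega
  · rintro ⟨p, t⟩ hq
    rw [Finset.mem_sigma, Finset.mem_powersetCard] at hq
    have hpt : p ∉ t := fun hc => Finset.notMem_erase p s (hq.2.1 hc)
    simp [Finset.erase_insert hpt]
  · rintro ⟨v, p⟩ hq
    rw [Finset.mem_sigma] at hq
    simp [Finset.insert_erase hq.2]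
  · rintro ⟨p, t⟩ hq
    rw [Finset.mem_sigma, Finset.mem_powersetCard] at hq
    have hpt : p ∉ t := fun hc => Finset.notMem_erase p s (hq.2.1 hc)
    simp only
    rw [Finset.erase_insert hpt]

/-- Double counting: sum over single deletions. -/
lemma ES_erase_sum (x : ι → ℝ) (j : ℕ) (s : Finset ι) :
    ∑ p ∈ s, ES x j (s.erase p) = ((s.card - j : ℕ)) * ES x j s := by
  simp only [ES]
  rw [Finset.sum_sigma', Finset.mul_sum]
  have : ∀ t ∈ s.powersetCard j, ((s.card - j : ℕ) : ℝ) * ∏ i ∈ t, x i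
      = ∑ _p ∈ s \ t, ∏ i ∈ t, x i := by
    intro t ht
    rw [Finset.sum_const, nsmul_eq_mul]
    congr 2
    rw [Finset.mem_powersetCard] at ht
    rw [Finset.card_sdiff_of_subset ht.1, ht.2]
  rw [Finset.sum_congr rfl this, Finset.sum_sigma']
  apply Finset.sum_nbij' (i := fun q => (⟨q.2, q.1⟩ : Σ _ : Finset ι, ι))
    (j := fun q => (⟨q.2, q.1⟩ : Σ _ : ι, Finset ι))
  · rintro ⟨p, t⟩ hq
    rw [Finset.mem_sigma, Finset.mem_powersetCard] at hq
    rw [Finset.mem_sigma, Finset.mem_powersetCard]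
    have hpt : p ∉ t := fun hc => Finset.notMem_erase p s (hq.2.1 hc)
    exact ⟨⟨hq.2.1.trans (Finset.erase_subset p s), hq.2.2⟩, Finset.mem_sdiff.2 ⟨hq.1, hpt⟩⟩
  · rintro ⟨t, p⟩ hq
    rw [Finset.mem_sigma, Finset.mem_powersetCard] at hq
    rw [Finset.mem_sigma, Finset.mem_powersetCard]
    obtain ⟨hps, hpt⟩ := Finset.mem_sdiff.1 hq.2
    refine ⟨hps, ⟨?_, hq.1.2⟩⟩
    intro a ha
    refine Finset.mem_erase.2 ⟨?_, hq.1.1 ha⟩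
    rintro rfl; exact hpt ha
  · rintro ⟨p, t⟩ _; rfl
  · rintro ⟨t, p⟩ _; rfl
  · rintro ⟨p, t⟩ _; rfl

/-- If all entries of `s` are at least `t0 ≥ 0`, then `t0·σ_j(s)` is controlled by `σ_{j+1}(s)`. -/
lemma ES_mul_le (x : ι → ℝ) (j : ℕ) (s : Finset ι) (t0 : ℝ) (ht0 : 0 ≤ t0)
    (hmin : ∀ i ∈ s, t0 ≤ x i) :
    ((s.card - j : ℕ)) * (t0 * ES x j s) ≤ (j+1 : ℕ) * ES x (j+1) s := by
  have hnn : ∀ i ∈ s, 0 ≤ x i := fun i hi => ht0.trans (hmin i hi)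
  calc ((s.card - j : ℕ)) * (t0 * ES x j s) = t0 * (∑ p ∈ s, ES x j (s.erase p)) := by
        rw [ES_erase_sum]; ring
    _ ≤ ∑ p ∈ s, x p * ES x j (s.erase p) := by
        rw [Finset.mul_sum]
        apply Finset.sum_le_sum
        intro p hp
        apply mul_le_mul_of_nonneg_right (hmin p hp)
        exact ES_nonneg fun i hi => hnn i (Finset.mem_of_mem_erase hi)
    _ = (j+1 : ℕ) * ES x (j+1) s := ES_weighted_sum x j s

lemma ES_insert (x : ι → ℝ) (j : ℕ) {s : Finset ι} {a : ι} (ha : a ∉ s) :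
    ES x (j+1) (insert a s) = ES x (j+1) s + x a * ES x j s := by
  have h := ES_erase x j (Finset.mem_insert_self a s)
  rwa [Finset.erase_insert ha] at h

lemma ES_one (x : ι → ℝ) (s : Finset ι) : ES x 1 s = ∑ p ∈ s, x p := by
  rw [ES, Finset.powersetCard_one, Finset.sum_map]
  simp

lemma sq_sum_eq_ES_two (x : ι → ℝ) (s : Finset ι) :
    (∑ p ∈ s, x p)^2 = (∑ p ∈ s, (x p)^2) + 2 * ES x 2 s := by
  induction s using Finset.induction with
  | empty => simp [ES_of_card_lt (by simp : (∅ : Finset ι).card < 2)]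
  | @insert a s ha ih =>
    rw [Finset.sum_insert ha, Finset.sum_insert ha, ES_insert x 1 ha, ES_one]
    ring_nf
    ring_nf at ih
    linarith [ih]

lemma ES_self (x : ι → ℝ) (s : Finset ι) : ES x s.card s = ∏ i ∈ s, x i := by
  rw [ES, Finset.powersetCard_self, Finset.sum_singleton]

lemma ES_compl (x : ι → ℝ) {s : Finset ι} {j : ℕ} (hj : j ≤ s.card) :
    ES x (s.card - j) s = ∑ t ∈ s.powersetCard j, ∏ i ∈ s \ t, x i := by
  rw [ES]
  apply Finset.sum_nbij' (i := fun t => s \ t) (j := fun t => s \ t)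
  · intro t ht
    rw [Finset.mem_powersetCard] at ht ⊢
    refine ⟨Finset.sdiff_subset, ?_⟩
    rw [Finset.card_sdiff_of_subset ht.1, ht.2]
    omega
  · intro t ht
    rw [Finset.mem_powersetCard] at ht ⊢
    refine ⟨Finset.sdiff_subset, ?_⟩
    rw [Finset.card_sdiff_of_subset ht.1, ht.2]
  · intro t ht
    rw [Finset.mem_powersetCard] at ht
    exact Finset.sdiff_sdiff_eq_self ht.1
  · intro t ht
    rw [Finset.mem_powersetCard] at ht
    exact Finset.sdiff_sdiff_eq_self ht.1
  · intro t ht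
    rw [Finset.mem_powersetCard] at ht
    rw [Finset.sdiff_sdiff_eq_self ht.1]

lemma erase_erase_eq_sdiff {s : Finset ι} (a b : ι) : (s.erase a).erase b = s \ {a, b} := by
  ext i
  simp only [Finset.mem_erase, Finset.mem_sdiff, Finset.mem_insert, Finset.mem_singleton]
  tauto

/-- Base case of Newton's inequality: number of variables equals `i+2`. -/
lemma newton_base (x : ι → ℝ) (s : Finset ι) (i : ℕ) (hcard : s.card = i + 2) :
    ES x (i+2) s * ES x i s * ((s.card.choose (i+1) : ℕ) : ℝ)^2 ≤
      (ES x (i+1) s)^2 * (((s.card.choose (i+2)) : ℝ) * ((s.card.choose i) : ℝ)) := by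
  classical
  set u : ι → ℝ := fun p => ∏ i ∈ s.erase p, x i with hu
  have hB1 : ES x (i+1) s = ∑ p ∈ s, u p := by
    have h1 : (1:ℕ) ≤ s.card := by omega
    have := ES_compl x (s := s) (j := 1) h1
    rw [hcard] at this
    rw [show i + 2 - 1 = i + 1 from rfl] at this
    rw [this, Finset.powersetCard_one, Finset.sum_map]
    apply Finset.sum_congr rfl
    intro p hp
    show ∏ i ∈ s \ {p}, x i = u p
    rw [Finset.sdiff_singleton_eq_erase]
  have hB2 : ES x (i+2) s * ES x i s = ES u 2 s := by
    have h2 : (2:ℕ) ≤ s.card := by omega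
    have hc := ES_compl x (s := s) (j := 2) h2
    rw [hcard, show i + 2 - 2 = i from rfl] at hc
    rw [← hcard, ES_self, hc, ES, Finset.mul_sum]
    apply Finset.sum_congr rfl
    intro t ht
    rw [Finset.mem_powersetCard] at ht
    obtain ⟨a, b, hab, rfl⟩ := Finset.card_eq_two.1 ht.2
    have has : a ∈ s := ht.1 (by simp)
    have hbs : b ∈ s := ht.1 (by simp)
    have hba : b ∈ s.erase a := Finset.mem_erase.2 ⟨fun h => hab h.symm, hbs⟩
    have hab' : a ∈ s.erase b := Finset.mem_erase.2 ⟨hab, has⟩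
    rw [Finset.prod_pair hab]
    have hua : u a = x b * ∏ i ∈ (s.erase a).erase b, x i := (Finset.mul_prod_erase _ x hba).symm
    have hub : u b = x a * ∏ i ∈ (s.erase b).erase a, x i := (Finset.mul_prod_erase _ x hab').symm
    have hcomm : (s.erase b).erase a = (s.erase a).erase b := by
      rw [erase_erase_eq_sdiff, erase_erase_eq_sdiff]
      congr 1
      ext i; simp; tauto
    have hs : ∏ i ∈ s, x i = x a * (x b * ∏ i ∈ (s.erase a).erase b, x i) := by
      rw [← hua, hu]
      exact (Finset.mul_prod_erase _ x has).symm
    rw [hua, hub, hcomm, hs, erase_erase_eq_sdiff]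
    ring
  have hCS : (∑ p ∈ s, u p)^2 ≤ (s.card : ℝ) * ∑ p ∈ s, (u p)^2 := by
    have := sq_sum_le_card_mul_sum_sq (s := s) (f := u)
    exact_mod_cast this
  have hsq : (∑ p ∈ s, u p)^2 = (∑ p ∈ s, (u p)^2) + 2 * ES u 2 s := sq_sum_eq_ES_two u s
  -- choose values
  have hc1 : s.card.choose (i+1) = i + 2 := by
    have h' := Nat.choose_symm (show 1 ≤ i+2 by omega)
    rw [show i + 2 - 1 = i + 1 from rfl] at h'
    rw [hcard, h', Nat.choose_one_right]
  have hc2 : s.card.choose (i+2) = 1 := by rw [hcard, Nat.choose_self]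
  have hc0 : s.card.choose i * 2 = (i+2) * (i+1) := by
    have h' := Nat.choose_symm (show 2 ≤ i+2 by omega)
    simp only [Nat.add_sub_cancel] at h'
    have h'' := Nat.choose_succ_right_eq (i+2) 1
    rw [Nat.choose_one_right] at h''
    norm_num at h''
    rw [hcard, h']
    omega
  rw [hB1, hB2, hc1, hc2]
  have hc0' : (((i+2)*(i+1) : ℕ) : ℝ) = 2 * ((s.card.choose i : ℕ) : ℝ) := by
    rw [← hc0]; push_cast; ring
  have hcardR : ((s.card : ℕ) : ℝ) = ((i:ℝ) + 2) := by rw [hcard]; push_cast; ring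
  rw [hcardR] at hCS
  set S1 := ∑ p ∈ s, u p
  set S2 := ∑ p ∈ s, (u p)^2
  have h2 : 2 * ES u 2 s = S1^2 - S2 := by linarith [hsq]
  have hchoose_pos : (0:ℝ) ≤ ((s.card.choose i : ℕ) : ℝ) := by positivity
  push_cast
  push_cast at hc0'
  nlinarith [hCS, h2, hc0', sq_nonneg S1]

open Polynomial in
/-- Differentiation step: given `M` reals, there are `M-1` reals whose elementary symmetric
functions are proportional to those of the original. -/
lemma deriv_step (s : Multiset ℝ) (M : ℕ) (hM : Multiset.card s = M) (h1 : 1 ≤ M) :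
    ∃ t : Multiset ℝ, Multiset.card t = M - 1 ∧
      ∀ j : ℕ, j ≤ M - 1 → (M:ℝ) * t.esymm j = ((M:ℝ) - (j:ℝ)) * s.esymm j := by
  obtain ⟨m, rfl⟩ : ∃ m, M = m + 1 := ⟨M - 1, by omega⟩
  set f : ℝ[X] := (s.map fun a => X - C a).prod with hf
  have hdeg : f.natDegree = m + 1 := by
    rw [hf, Polynomial.natDegree_multiset_prod_X_sub_C_eq_card, hM]
  have hroots : f.roots = s := roots_multiset_prod_X_sub_C s
  have hmonic : f.Monic := monic_multiset_prod_of_monic _ _ (fun a _ => monic_X_sub_C a)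
  set p := derivative f with hp
  have hdle : p.natDegree ≤ m := by
    have h := natDegree_derivative_le f
    rw [← hp, hdeg] at h
    simpa using h
  have hcge : m ≤ Multiset.card p.roots := by
    have h := Polynomial.card_roots_le_derivative f
    rw [← hp, hroots, hM] at h
    omega
  have hcle : Multiset.card p.roots ≤ p.natDegree := p.card_roots'
  have hpdeg : p.natDegree = m := by omega
  have hpcard : Multiset.card p.roots = m := by omega
  refine ⟨p.roots, hpcard, ?_⟩
  intro j hj
  simp only [Nat.add_sub_cancel] at hj
  have hlead : p.leadingCoeff = ((m:ℝ) + 1) := by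
    rw [Polynomial.leadingCoeff, hpdeg, hp, coeff_derivative, ← hdeg, hmonic.coeff_natDegree]
    push_cast [hdeg]
    ring
  have hco1 : p.coeff (m - j) = ((-1:ℝ))^j * s.esymm j * ((m:ℝ) + 1 - j) := by
    rw [hp, coeff_derivative]
    have hidx : m - j + 1 = m + 1 - j := by omega
    rw [hidx]
    have hle : m + 1 - j ≤ Multiset.card s := by omega
    have := Multiset.prod_X_sub_C_coeff s hle
    rw [← hf] at this
    rw [this, hM, show m + 1 - (m + 1 - j) = j by omega]
    rw [Nat.cast_sub hj]
    ring
  have hco2 : p.coeff (m - j) = ((m:ℝ) + 1) * ((-1:ℝ))^j * p.roots.esymm j := by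
    have hle : m - j ≤ p.natDegree := by omega
    have := Polynomial.coeff_eq_esymm_roots_of_card (by rw [hpcard, hpdeg]) hle
    rw [this, hpdeg, show m - (m - j) = j by omega, hlead]
  have hpow : ((-1:ℝ))^j * ((-1:ℝ))^j = 1 := by
    rw [← pow_add, ← two_mul, pow_mul]
    norm_num
  have heq := hco1.symm.trans hco2
  have heq' : ((-1:ℝ))^j * (s.esymm j * ((m:ℝ)+1-j)) = ((-1:ℝ))^j * (((m:ℝ)+1) * p.roots.esymm j) := by
    linear_combination heq
  have key := mul_left_cancel₀ (pow_ne_zero j (by norm_num : (-1:ℝ) ≠ 0)) heq'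
  push_cast
  linarith [key]

lemma choose_deriv (m r : ℕ) (hr : r ≤ m + 1) :
    ((m:ℝ) + 1) * ((m.choose r : ℕ):ℝ) = (((m:ℝ) + 1) - r) * (((m+1).choose r : ℕ):ℝ) := by
  have h1 := Nat.add_one_mul_choose_eq m r
  have h2 := Nat.choose_succ_right_eq (m+1) r
  have h3 : (m+1) * m.choose r = (m+1).choose r * (m+1-r) := h1.trans h2
  have h4 : (((m+1) * m.choose r : ℕ) : ℝ) = (((m+1).choose r * (m+1-r) : ℕ) : ℝ) := by
    exact_mod_cast congrArg (Nat.cast (R := ℝ)) h3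
  push_cast [Nat.cast_sub hr] at h4
  linarith [h4]

/-- Newton's inequality for multisets of real numbers. -/
theorem newton_m (M : ℕ) : ∀ (s : Multiset ℝ), Multiset.card s = M → ∀ i : ℕ,
    s.esymm (i+2) * s.esymm i * ((M.choose (i+1) : ℕ):ℝ)^2 ≤
      (s.esymm (i+1))^2 * (((M.choose (i+2)):ℝ) * ((M.choose i):ℝ)) := by
  induction M using Nat.strong_induction_on with
  | _ M IH =>
  intro s hs i
  rcases lt_trichotomy M (i+2) with hlt | heq | hgt
  · have h0 : s.esymm (i+2) = 0 := by
      rw [Multiset.esymm, Multiset.powersetCard_eq_empty _ (by omega : Multiset.card s < i+2)]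
      simp
    rw [h0, zero_mul, zero_mul]
    positivity
  · -- base case: M = i + 2
    subst heq
    set l := s.toList with hl
    have hlen : l.length = i + 2 := by rw [hl, Multiset.length_toList, hs]
    have hbridge : ∀ j, s.esymm j = ES l.get j (Finset.univ : Finset (Fin l.length)) := by
      intro j
      have h1 : (Finset.univ : Finset (Fin l.length)).val.map l.get = (l : Multiset ℝ) := by
        rw [Fin.univ_def]
        show Multiset.map l.get (List.finRange l.length : Multiset (Fin l.length)) = _
        rw [Multiset.map_coe, List.map_get_finRange]
      have h2 := Finset.esymm_map_val l.get (Finset.univ : Finset (Fin l.length)) j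
      rw [h1, Multiset.coe_toList] at h2
      simpa [ES] using h2
    have hcard_univ : (Finset.univ : Finset (Fin l.length)).card = i + 2 := by
      simp [hlen]
    have hnb := newton_base l.get Finset.univ i hcard_univ
    rw [hcard_univ] at hnb
    rw [hbridge, hbridge, hbridge]
    exact hnb
  · -- inductive step: M > i + 2
    obtain ⟨m, rfl⟩ : ∃ m, M = m + 1 := ⟨M - 1, by omega⟩
    obtain ⟨t, htc, hrel⟩ := deriv_step s (m+1) hs (by omega)
    simp only [Nat.add_sub_cancel] at htc
    have hIH := IH m (by omega) t htc i
    have hMne : ((m:ℝ) + 1) ≠ 0 := by positivity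
    -- express primed quantities
    have ea : t.esymm i = ((((m:ℝ)+1) - i) * s.esymm i) / ((m:ℝ)+1) := by
      rw [eq_div_iff hMne]
      have := hrel i (by omega)
      push_cast at this ⊢
      linarith
    have eb : t.esymm (i+1) = ((((m:ℝ)+1) - (i+1)) * s.esymm (i+1)) / ((m:ℝ)+1) := by
      rw [eq_div_iff hMne]
      have := hrel (i+1) (by omega)
      push_cast at this ⊢
      linarith
    have ec : t.esymm (i+2) = ((((m:ℝ)+1) - (i+2)) * s.esymm (i+2)) / ((m:ℝ)+1) := by
      rw [eq_div_iff hMne]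
      have := hrel (i+2) (by omega)
      push_cast at this ⊢
      linarith
    have eA : ((m.choose i : ℕ):ℝ) = ((((m:ℝ)+1) - i) * (((m+1).choose i : ℕ):ℝ)) / ((m:ℝ)+1) := by
      rw [eq_div_iff hMne]
      have := choose_deriv m i (by omega)
      linarith
    have eB : ((m.choose (i+1) : ℕ):ℝ)
        = ((((m:ℝ)+1) - (i+1)) * (((m+1).choose (i+1) : ℕ):ℝ)) / ((m:ℝ)+1) := by
      rw [eq_div_iff hMne]
      have := choose_deriv m (i+1) (by omega)
      push_cast at this ⊢
      linarith
    have eC : ((m.choose (i+2) : ℕ):ℝ)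
        = ((((m:ℝ)+1) - (i+2)) * (((m+1).choose (i+2) : ℕ):ℝ)) / ((m:ℝ)+1) := by
      rw [eq_div_iff hMne]
      have := choose_deriv m (i+2) (by omega)
      push_cast at this ⊢
      linarith
    rw [ea, eb, ec, eA, eB, eC] at hIH
    have hgt' : (i:ℝ) + 2 < (m:ℝ) + 1 := by
      push_cast
      exact_mod_cast hgt
    set P : ℝ := (((m:ℝ)+1) - (i+2)) * (((m:ℝ)+1) - i) * ((((m:ℝ)+1) - (i+1)))^2 with hP
    have hPpos : 0 < P := by
      rw [hP]
      have h1 : 0 < ((m:ℝ)+1) - (i+2) := by linarith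
      have h2 : 0 < ((m:ℝ)+1) - i := by linarith
      have h3 : 0 < ((m:ℝ)+1) - (i+1) := by linarith
      positivity
    have key : P * (s.esymm (i+2) * s.esymm i * (((m+1).choose (i+1) : ℕ):ℝ)^2)
        ≤ P * ((s.esymm (i+1))^2 * ((((m+1).choose (i+2)):ℝ) * (((m+1).choose i):ℝ))) := by
      have hIH' := mul_le_mul_of_nonneg_left hIH
        (by positivity : (0:ℝ) ≤ (((m:ℝ)+1))^4)
      calc P * (s.esymm (i+2) * s.esymm i * (((m+1).choose (i+1) : ℕ):ℝ)^2)
          = (((m:ℝ)+1))^4 * (((((m:ℝ)+1) - (i+2)) * s.esymm (i+2) / ((m:ℝ)+1))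
            * (((((m:ℝ)+1) - i) * s.esymm i) / ((m:ℝ)+1))
            * (((((m:ℝ)+1) - (i+1)) * (((m+1).choose (i+1) : ℕ):ℝ)) / ((m:ℝ)+1))^2) := by
            rw [hP]; field_simp
        _ ≤ (((m:ℝ)+1))^4 * ((((((m:ℝ)+1) - (i+1)) * s.esymm (i+1)) / ((m:ℝ)+1))^2
            * ((((((m:ℝ)+1) - (i+2)) * (((m+1).choose (i+2) : ℕ):ℝ)) / ((m:ℝ)+1))
            * (((((m:ℝ)+1) - i) * (((m+1).choose i : ℕ):ℝ)) / ((m:ℝ)+1)))) := by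
            have hh := hIH'
            push_cast at hh ⊢
            convert hh using 2 <;> ring
        _ = P * ((s.esymm (i+1))^2 * ((((m+1).choose (i+2)):ℝ) * (((m+1).choose i):ℝ))) := by
            rw [hP]; field_simp
    have := le_of_mul_le_mul_left key hPpos
    push_cast at this ⊢
    linarith

/-- Newton's inequality, Finset version. -/
lemma newton_fin (s : Finset ι) (x : ι → ℝ) (i : ℕ) :
    ES x (i+2) s * ES x i s * ((s.card.choose (i+1) : ℕ):ℝ)^2 ≤
      (ES x (i+1) s)^2 * (((s.card.choose (i+2)):ℝ) * ((s.card.choose i):ℝ)) := by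
  have hb : ∀ j, ES x j s = (s.val.map x).esymm j := by
    intro j
    have h := Finset.esymm_map_val x s j
    simpa [ES] using h.symm
  rw [hb, hb, hb]
  exact newton_m s.card (s.val.map x) (by simp) i

/-- Log-concavity of binomial coefficients. -/
lemma choose_logconcave (M r : ℕ) : M.choose (r+2) * M.choose r ≤ (M.choose (r+1))^2 := by
  rcases Nat.lt_or_ge M (r+2) with h | h
  · rw [Nat.choose_eq_zero_of_lt h, zero_mul]
    exact Nat.zero_le _
  · have i1 := Nat.choose_succ_right_eq M (r+1)
    have i2 := Nat.choose_succ_right_eq M r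
    have hpos : 0 < (r+2) * (M-r) := by
      apply Nat.mul_pos (by omega)
      omega
    apply Nat.le_of_mul_le_mul_right _ hpos
    calc M.choose (r+2) * M.choose r * ((r+2) * (M-r))
        = (M.choose (r+2) * (r+2)) * (M.choose r * (M-r)) := by ring
      _ = (M.choose (r+1) * (M-(r+1))) * (M.choose (r+1) * (r+1)) := by rw [i1, i2]
      _ = (M.choose (r+1))^2 * ((M-(r+1)) * (r+1)) := by ring
      _ ≤ (M.choose (r+1))^2 * ((M-r) * (r+2)) := by
          apply Nat.mul_le_mul_left
          apply Nat.mul_le_mul <;> omega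
      _ = (M.choose (r+1))^2 * ((r+2) * (M-r)) := by ring

/-- Deleting a minimal entry keeps all the symmetric functions positive (up to the same level). -/
lemma gamma_erase_min (k : ℕ) : ∀ (s : Finset ι) (x : ι → ℝ) (p : ι), p ∈ s →
    (∀ i ∈ s, x p ≤ x i) → (∀ j : ℕ, 1 ≤ j → j ≤ k → 0 < ES x j s) →
    ∀ j : ℕ, 1 ≤ j → j ≤ k → j + 1 ≤ s.card → 0 < ES x j (s.erase p) := by
  induction k with
  | zero => intro s x p _ _ _ j h1 h2 _; omega
  | succ k IHk =>
    intro s x p hp hmin hΓ j h1 hjk hjs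
    rcases Nat.lt_or_ge j (k+1) with hlt | hge
    · exact IHk s x p hp hmin (fun j a b => hΓ j a (by omega)) j h1 (by omega) hjs
    · have hj : j = k + 1 := by omega
      subst hj
      by_cases hx : 0 < x p
      · apply ES_pos
        · intro i hi
          exact lt_of_lt_of_le hx (hmin i (Finset.mem_of_mem_erase hi))
        · rw [Finset.card_erase_of_mem hp]; omega
      · push_neg at hx
        have hrec : 0 ≤ ES x k (s.erase p) := by
          rcases Nat.eq_zero_or_pos k with hk0 | hk1
          · subst hk0; rw [ES_zero]; norm_num
          · exact le_of_lt (IHk s x p hp hmin (fun j a b => hΓ j a (by omega)) k hk1 le_rfl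
              (by omega))
        have he := ES_erase x k hp
        have hS := hΓ (k+1) (by omega) le_rfl
        nlinarith [mul_nonpos_of_nonpos_of_nonneg hx hrec]

/-- Deleting an arbitrary entry keeps the symmetric functions positive one level down. -/
lemma gamma_erase (k : ℕ) : ∀ (s : Finset ι) (x : ι → ℝ), k ≤ s.card →
    (∀ j : ℕ, 1 ≤ j → j ≤ k → 0 < ES x j s) →
    ∀ p ∈ s, ∀ j : ℕ, 1 ≤ j → j + 1 ≤ k → 0 < ES x j (s.erase p) := by
  induction k with
  | zero => intro s x _ _ p hp j h1 h2 ; omega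
  | succ k IHk =>
    intro s x hcard hΓ p hp j h1 hjk
    rcases Nat.lt_or_ge j k with hlt | hge
    · exact IHk s x (by omega) (fun j a b => hΓ j a (by omega)) p hp j h1 (by omega)
    · have hj : j = k := by omega
      subst hj
      -- here j = k ≥ 1 and card s ≥ k + 1
      obtain ⟨k', rfl⟩ : ∃ k', j = k' + 1 := ⟨j - 1, by omega⟩
      obtain ⟨q, hq, hqmax⟩ := Finset.exists_max_image s x ⟨p, hp⟩
      -- Step 1 : positivity for the deletion of the largest entry
      have step1 : 0 < ES x (k'+1) (s.erase q) := by
        by_contra hne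
        push_neg at hne
        have hxq : 0 < x q := by
          by_contra hxq
          push_neg at hxq
          have h1' := hΓ 1 le_rfl (by omega)
          rw [ES_one] at h1'
          have : ∑ i ∈ s, x i ≤ 0 :=
            Finset.sum_nonpos fun i hi => le_trans (hqmax i hi) hxq
          linarith
        have hkm1 : 0 < ES x k' (s.erase q) := by
          rcases Nat.eq_zero_or_pos k' with hk0 | hk1
          · subst hk0; rw [ES_zero]; norm_num
          · exact IHk s x (by omega) (fun j a b => hΓ j a (by omega)) q hq k' hk1 (by omega)
        have e1 := ES_erase x (k'+1) hq
        have e2 := ES_erase x k' hq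
        have hs2 := hΓ (k'+2) (by omega) (by omega)
        have hs1 := hΓ (k'+1) (by omega) (by omega)
        -- Newton's inequality on `s.erase q`
        have hnewton := newton_fin (s.erase q) x k'
        have hvcard : (s.erase q).card = s.card - 1 := Finset.card_erase_of_mem hq
        have hC := choose_logconcave (s.card - 1) k'
        have hCcast : (((s.card - 1).choose (k'+2)):ℝ) * (((s.card -1).choose k'):ℝ)
            ≤ (((s.card -1).choose (k'+1)):ℝ)^2 := by
          exact_mod_cast hC
        have hC1pos : (0:ℝ) < (((s.card -1).choose (k'+1)):ℝ) := by
          have : k'+1 ≤ s.card - 1 := by omega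
          exact_mod_cast Nat.choose_pos this
        rw [hvcard] at hnewton
        -- derive the contradiction
        have key1 : x q * (- ES x (k'+1) (s.erase q)) < ES x (k'+2) (s.erase q) := by
          nlinarith [e1, hs2]
        have key2 : - ES x (k'+1) (s.erase q) < x q * ES x k' (s.erase q) := by
          nlinarith [e2, hs1]
        set E2 := ES x (k'+2) (s.erase q)
        set E1 := ES x (k'+1) (s.erase q)
        set E0 := ES x k' (s.erase q)
        have hE1n : 0 ≤ -E1 := by linarith
        have m2 : (-E1)*(-E1) ≤ (-E1)*(x q * E0) := mul_le_mul_of_nonneg_left key2.le hE1n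
        have m1 : (x q * (-E1))*(E0 * x q) < E2*(E0 * x q) :=
          mul_lt_mul_of_pos_right key1 (mul_pos hkm1 hxq)
        have h3 : E1^2 * x q < E2*E0* x q := by
          nlinarith [m1, m2, mul_le_mul_of_nonneg_right m2 hxq.le]
        have h4 : E1^2 < E2*E0 := lt_of_mul_lt_mul_right h3 hxq.le
        have h5 : E2*E0*(((s.card -1).choose (k'+1):ℕ):ℝ)^2
            ≤ E1^2*(((s.card -1).choose (k'+1):ℕ):ℝ)^2 :=
          hnewton.trans (mul_le_mul_of_nonneg_left hCcast (sq_nonneg E1))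
        have h6 : E1^2*(((s.card -1).choose (k'+1):ℕ):ℝ)^2
            < E2*E0*(((s.card -1).choose (k'+1):ℕ):ℝ)^2 :=
          mul_lt_mul_of_pos_right h4 (by positivity)
        linarith
      -- Step 2 : compare deletion of `p` with deletion of `q`
      by_cases hpq : p = q
      · rw [hpq]; exact step1
      · have hqp : q ∈ s.erase p := Finset.mem_erase.2 ⟨fun h => hpq h.symm, hq⟩
        have hpq' : p ∈ s.erase q := Finset.mem_erase.2 ⟨hpq, hp⟩
        have e1 := ES_erase x k' hqp
        have e2 := ES_erase x k' hpq'
        have hcomm : (s.erase p).erase q = (s.erase q).erase p := by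
          rw [erase_erase_eq_sdiff, erase_erase_eq_sdiff]
          congr 1
          ext i; simp; tauto
        rw [hcomm] at e1
        have hu : 0 ≤ ES x k' ((s.erase q).erase p) := by
          rcases Nat.eq_zero_or_pos k' with hk0 | hk1
          · subst hk0; rw [ES_zero]; norm_num
          · -- apply IHk to s.erase q
            have hvΓ : ∀ j : ℕ, 1 ≤ j → j ≤ k'+1 → 0 < ES x j (s.erase q) := by
              intro j hj1 hj2
              rcases Nat.lt_or_ge j (k'+1) with hl | hg
              · exact IHk s x (by omega) (fun j a b => hΓ j a (by omega)) q hq j hj1 (by omega)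
              · have : j = k'+1 := by omega
                subst this; exact step1
            apply le_of_lt
            exact IHk (s.erase q) x (by rw [Finset.card_erase_of_mem hq]; omega) hvΓ p hpq' k'
              hk1 (by omega)
        have hxpq : x p ≤ x q := hqmax p hp
        nlinarith [e1, e2, step1, mul_le_mul_of_nonneg_right hxpq hu]

/-- Key comparison: deleting the smallest entry versus deleting the second smallest. -/
lemma key_lemma (x : ι → ℝ) (s : Finset ι) (k2 : ℕ) (i0 i1 : ι)
    (h01 : i0 ≠ i1) (h0 : i0 ∈ s) (h1 : i1 ∈ s)
    (hcard : k2 + 3 ≤ s.card)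
    (hmin0 : ∀ i ∈ s, x i0 ≤ x i)
    (hmin1 : ∀ i ∈ s.erase i0, x i1 ≤ x i)
    (hΓ : ∀ j : ℕ, 1 ≤ j → j ≤ k2+2 → 0 < ES x j s) :
    ES x (k2+1) (s.erase i0) ≤ (((s.card:ℝ) - 1) * ((k2:ℝ)+2)) * ES x (k2+1) (s.erase i1) := by
  have h1' : i1 ∈ s.erase i0 := Finset.mem_erase.2 ⟨fun h => h01 h.symm, h1⟩
  have h0' : i0 ∈ s.erase i1 := Finset.mem_erase.2 ⟨h01, h0⟩
  set w := (s.erase i0).erase i1 with hw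
  have hcomm : (s.erase i1).erase i0 = w := by
    rw [hw, erase_erase_eq_sdiff, erase_erase_eq_sdiff]
    congr 1
    ext i; simp; tauto
  have hwcard : w.card = s.card - 2 := by
    rw [hw, Finset.card_erase_of_mem h1', Finset.card_erase_of_mem h0]
    omega
  set A := ES x k2 w with hA_def
  set B := ES x (k2+1) w with hB_def
  -- positivity of A and B
  have hΓ0 : ∀ j : ℕ, 1 ≤ j → j ≤ k2+2 → 0 < ES x j (s.erase i0) := by
    intro j hj1 hj2
    exact gamma_erase_min (k2+2) s x i0 h0 hmin0 hΓ j hj1 hj2 (by omega)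
  have hW : ∀ j : ℕ, 1 ≤ j → j ≤ k2+2 → j + 1 ≤ s.card - 1 → 0 < ES x j w := by
    intro j hj1 hj2 hj3
    refine gamma_erase_min (k2+2) (s.erase i0) x i1 h1' hmin1 hΓ0 j hj1 hj2 ?_
    rw [Finset.card_erase_of_mem h0]; omega
  have hB : 0 < B := hW (k2+1) (by omega) (by omega) (by omega)
  have hA : 0 < A := by
    rcases Nat.eq_zero_or_pos k2 with hk0 | hk1
    · rw [hA_def, hk0, ES_zero]; norm_num
    · exact hW k2 hk1 (by omega) (by omega)
  -- expansions
  have hBx1 : ES x (k2+1) (s.erase i0) = B + x i1 * A := ES_erase x k2 h1'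
  have hBx0 : ES x (k2+1) (s.erase i1) = B + x i0 * A := by
    have := ES_erase x k2 h0'
    rwa [hcomm] at this
  have hs0pos : 0 < B + x i1 * A := by rw [← hBx1]; exact hΓ0 (k2+1) (by omega) (by omega)
  have hs1pos : 0 < B + x i0 * A := by
    rw [← hBx0]
    exact gamma_erase (k2+2) s x (by omega) hΓ i1 h1 (k2+1) (by omega) (by omega)
  -- the diamond inequality from σ_{k2+2}(s) > 0
  have hdia : 0 < ES x (k2+2) w + x i1 * B + x i0 * (B + x i1 * A) := by
    have e1 := ES_erase x (k2+1) h0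
    have e2 := ES_erase x (k2+1) h1'
    rw [hBx1] at e1
    rw [← hw] at e2
    have hpos := hΓ (k2+2) (by omega) (by omega)
    rw [e1, e2] at hpos
    linarith
  -- notation for the dimension constants
  set d : ℕ := s.card - (k2 + 2) with hd_def
  have hd1 : 1 ≤ d := by omega
  set dd : ℝ := (d : ℝ) with hdd
  set κ : ℝ := (k2 : ℝ) + 1 with hκ
  have hdd1 : 1 ≤ dd := by rw [hdd]; exact_mod_cast hd1
  have hκpos : 0 < κ := by rw [hκ]; positivity
  -- ρ-bound : dd * (x i1 * A) ≤ κ * B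
  have hx1A : dd * (x i1 * A) ≤ κ * B := by
    rcases le_or_gt 0 (x i1) with hpos1 | hneg1
    · have hminw : ∀ i ∈ w, x i1 ≤ x i := fun i hi => hmin1 i (Finset.mem_of_mem_erase hi)
      have := ES_mul_le x k2 w (x i1) hpos1 hminw
      have hcast1 : ((w.card - k2 : ℕ) : ℝ) = dd := by
        rw [hdd, hwcard]
        congr 1
        omega
      have hcast2 : ((k2+1 : ℕ) : ℝ) = κ := by rw [hκ]; push_cast; ring
      rw [hcast1, hcast2] at this
      exact this
    · have : x i1 * A ≤ 0 := mul_nonpos_of_nonpos_of_nonneg hneg1.le hA.le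
      have hddpos : 0 < dd := by linarith
      nlinarith
  -- Newton bound : ES x (k2+2) w * A * ((k2+2) * dd) ≤ B^2 * ((dd - 1) * κ)
  have hNW : ES x (k2+2) w * A * (((k2:ℝ)+2) * dd) ≤ B^2 * ((dd - 1) * κ) := by
    have hnewton := newton_fin w x k2
    have i1eq := Nat.choose_succ_right_eq w.card (k2+1)
    have i2eq := Nat.choose_succ_right_eq w.card k2
    have hc1pos : 0 < ((w.card.choose (k2+1) : ℕ) : ℝ) := by
      have : k2+1 ≤ w.card := by omega
      exact_mod_cast Nat.choose_pos this
    -- cast the two choose identities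
    have i1R : ((w.card.choose (k2+2) : ℕ):ℝ) * ((k2:ℝ)+2)
        = ((w.card.choose (k2+1) : ℕ):ℝ) * (dd - 1) := by
      have hsub : (w.card - (k2+1) : ℕ) = d - 1 := by omega
      have hcg := congrArg (Nat.cast (R := ℝ)) i1eq
      push_cast [hsub] at hcg
      rw [hdd]
      simp only [show k2+1+1 = k2+2 from rfl] at hcg
      rw [Nat.cast_sub hd1] at hcg
      norm_num at hcg ⊢
      linarith [hcg]
    have i2R : ((w.card.choose (k2+1) : ℕ):ℝ) * κ
        = ((w.card.choose k2 : ℕ):ℝ) * dd := by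
      have hsub : (w.card - k2 : ℕ) = d := by omega
      have hcg := congrArg (Nat.cast (R := ℝ)) i2eq
      push_cast [hsub] at hcg
      rw [hκ, hdd]
      push_cast at hcg ⊢
      linarith
    -- multiply newton by ((k2+2) * dd) and rewrite
    have hmul := mul_le_mul_of_nonneg_right hnewton
      (by positivity : (0:ℝ) ≤ ((k2:ℝ)+2) * dd)
    have hc1ne : ((w.card.choose (k2+1) : ℕ) : ℝ) ≠ 0 := ne_of_gt hc1pos
    -- LHS : A3 * A * c1^2 * ((k2+2)*dd) ; RHS : B^2 * (c2*c0) * ((k2+2)*dd) = B^2*c1^2*(dd-1)*κ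
    have hrhs_eq : (ES x (k2+1) w)^2 * (((w.card.choose (k2+2) : ℕ):ℝ) * ((w.card.choose k2 : ℕ):ℝ))
          * (((k2:ℝ)+2) * dd)
        = (ES x (k2+1) w)^2 * ((w.card.choose (k2+1) : ℕ):ℝ)^2 * ((dd - 1) * κ) := by
      have expand : (((w.card.choose (k2+2) : ℕ):ℝ) * ((k2:ℝ)+2))
          * (((w.card.choose k2 : ℕ):ℝ) * dd)
          = (((w.card.choose (k2+1) : ℕ):ℝ) * (dd-1)) * (((w.card.choose (k2+1) : ℕ):ℝ) * κ) := by
        rw [i1R]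
        rw [show ((w.card.choose k2 : ℕ):ℝ) * dd = ((w.card.choose (k2+1) : ℕ):ℝ) * κ from i2R.symm]
      linear_combination (ES x (k2+1) w)^2 * expand
    rw [hrhs_eq] at hmul
    have e_l : (ES x (k2+2) w * ES x k2 w * (((k2:ℝ)+2) * dd)) * ((w.card.choose (k2+1) : ℕ):ℝ)^2
        = ES x (k2+2) w * ES x k2 w * ((w.card.choose (k2+1) : ℕ):ℝ)^2 * (((k2:ℝ)+2) * dd) := by
      ring
    have e_r : ((ES x (k2+1) w)^2 * ((dd - 1) * κ)) * ((w.card.choose (k2+1) : ℕ):ℝ)^2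
        = (ES x (k2+1) w)^2 * ((w.card.choose (k2+1) : ℕ):ℝ)^2 * ((dd - 1) * κ) := by
      ring
    have hscaled : (ES x (k2+2) w * ES x k2 w * (((k2:ℝ)+2) * dd))
          * ((w.card.choose (k2+1) : ℕ):ℝ)^2
        ≤ ((ES x (k2+1) w)^2 * ((dd - 1) * κ)) * ((w.card.choose (k2+1) : ℕ):ℝ)^2 := by
      rw [e_l, e_r]; exact hmul
    have hfin := le_of_mul_le_mul_right hscaled (by positivity)
    rw [← hA_def, ← hB_def] at hfin
    exact hfin
  -- final case analysis
  rw [hBx1, hBx0]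
  have hCK : ((s.card:ℝ) - 1) * ((k2:ℝ)+2) = (dd + κ) * (κ + 1) := by
    rw [hdd, hκ, hd_def]
    rw [Nat.cast_sub (by omega : k2 + 2 ≤ s.card)]
    push_cast
    ring
  rw [hCK]
  rcases le_or_gt 0 (x i0) with hge0 | hlt0
  · -- easy case
    have hstep : dd * (B + x i1 * A) ≤ (dd + κ) * B := by nlinarith [hx1A]
    have ha0A : 0 ≤ x i0 * A := mul_nonneg hge0 hA.le
    have hdκ : (0:ℝ) < dd + κ := by linarith
    have c1 : B + x i1 * A ≤ dd * (B + x i1 * A) := by nlinarith [hdd1, hs0pos]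
    have c2 : (dd+κ) * B ≤ (dd+κ) * (B + x i0 * A) := by nlinarith [ha0A, hdκ]
    have c3 : (dd+κ) * (B + x i0 * A) ≤ (dd+κ) * (κ+1) * (B + x i0 * A) := by
      nlinarith [mul_pos (mul_pos hdκ hκpos) hs1pos]
    linarith [c1, hstep, c2, c3]
  · -- hard case
    have hk2κ : (k2:ℝ) + 2 = κ + 1 := by rw [hκ]; ring
    rw [hk2κ] at hNW
    have hGpos : (0:ℝ) < (κ+1) * dd :=
      mul_pos (by linarith) (by linarith)
    have e_t1 : -(ES x (k2+2) w + x i1 * B) < x i0 * (B + x i1 * A) := by nlinarith [hdia]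
    have e_t2 := mul_lt_mul_of_pos_left e_t1 (mul_pos hA hGpos)
    have hmain : B^2 * (dd + κ) < ((κ+1)*dd) * ((B + x i1 * A) * (B + x i0 * A)) := by
      nlinarith [e_t2, hNW]
    have hstep : dd * (B + x i1 * A) ≤ (dd + κ) * B := by nlinarith [hx1A]
    have hsq : (dd * (B + x i1 * A))^2 ≤ ((dd + κ) * B)^2 := by
      have hl : 0 ≤ dd * (B + x i1 * A) := by positivity
      nlinarith [hstep, hl]
    have hcomb : dd^2 * (B + x i1 * A)^2
        < (dd + κ) * (((κ+1)*dd) * ((B + x i1 * A) * (B + x i0 * A))) := by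
      have hm := mul_lt_mul_of_pos_left hmain (by positivity : (0:ℝ) < dd + κ)
      calc dd^2 * (B + x i1 * A)^2 = (dd * (B + x i1 * A))^2 := by ring
        _ ≤ ((dd + κ) * B)^2 := hsq
        _ = (dd + κ) * (B^2 * (dd + κ)) := by ring
        _ < (dd + κ) * (((κ+1)*dd) * ((B + x i1 * A) * (B + x i0 * A))) := hm
    have hcancel : dd^2 * (B + x i1 * A) < (dd + κ) * ((κ+1)*dd) * (B + x i0 * A) := by
      have h' : (dd^2 * (B + x i1 * A)) * (B + x i1 * A)
          < ((dd + κ) * ((κ+1)*dd) * (B + x i0 * A)) * (B + x i1 * A) := by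
        calc (dd^2 * (B + x i1 * A)) * (B + x i1 * A) = dd^2 * (B + x i1 * A)^2 := by ring
          _ < (dd + κ) * (((κ+1)*dd) * ((B + x i1 * A) * (B + x i0 * A))) := hcomb
          _ = ((dd + κ) * ((κ+1)*dd) * (B + x i0 * A)) * (B + x i1 * A) := by ring
      exact lt_of_mul_lt_mul_right h' hs0pos.le
    have hdd0 : (0:ℝ) < dd := by linarith
    have h2' : dd * (B + x i1 * A) < (dd+κ) * (κ+1) * (B + x i0 * A) := by
      apply lt_of_mul_lt_mul_right _ hdd0.le
      calc dd * (B + x i1 * A) * dd = dd^2 * (B + x i1 * A) := by ring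
        _ < (dd + κ) * ((κ+1)*dd) * (B + x i0 * A) := hcancel
        _ = (dd+κ) * (κ+1) * (B + x i0 * A) * dd := by ring
    have hfinal : B + x i1 * A ≤ dd * (B + x i1 * A) := by nlinarith [hdd1, hs0pos]
    linarith


/-- The `m`-th elementary symmetric function of `x ∈ ℝⁿ`. -/
noncomputable def esym (n m : ℕ) (x : Fin n → ℝ) : ℝ :=
  ∑ s ∈ Finset.univ.powersetCard m, ∏ i ∈ s, x i

/-- `σ_m(x|p)`: the `m`-th elementary symmetric function of the vector obtained from `x`
by deleting the entry `x p`. -/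
noncomputable def esymDel (n m : ℕ) (x : Fin n → ℝ) (p : Fin n) : ℝ :=
  ∑ s ∈ (Finset.univ.erase p).powersetCard m, ∏ i ∈ s, x i

/-- The Gårding cone `Γ_k ⊂ ℝⁿ`. -/
def GardingCone (n k : ℕ) : Set (Fin n → ℝ) :=
  {x | ∀ i : ℕ, 1 ≤ i → i ≤ k → 0 < esym n i x}

/-- Key ellipticity lemma for `σ_k`-type operators. -/
theorem stmt_3 (n k : ℕ) (hk1 : 1 ≤ k) (hkn : k ≤ n - 1) :
    ∃ c : ℝ, 0 < c ∧
      ∀ lam η : Fin n → ℝ,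
        (∀ i j : Fin n, i ≤ j → lam j ≤ lam i) →
        (∀ i : Fin n, η i = (∑ j : Fin n, lam j) - lam i) →
        η ∈ GardingCone n k →
        ∀ f : Fin n → ℝ,
          (∀ i : Fin n, f i =
            (1 / (k : ℝ)) * (esym n k η) ^ ((1 : ℝ) / (k : ℝ) - 1) *
              ∑ l ∈ Finset.univ.erase i, esymDel n (k - 1) η l) →
          c * ∑ i : Fin n, f i ≤ f ⟨0, by omega⟩ := by
  have hn2 : 2 ≤ n := by omega
  have hkn' : k + 1 ≤ n := by omega
  have hnR : (2:ℝ) ≤ (n:ℝ) := by exact_mod_cast hn2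
  have hkR : (1:ℝ) ≤ (k:ℝ) := by exact_mod_cast hk1
  have hden_pos : (0:ℝ) < (n:ℝ) * (1 + ((n:ℝ) - 1) * (k:ℝ)) := by
    have h1 : (0:ℝ) < (n:ℝ) := by linarith
    have h2 : (0:ℝ) < 1 + ((n:ℝ) - 1) * (k:ℝ) := by
      nlinarith [mul_pos (show (0:ℝ) < (n:ℝ) - 1 by linarith) (show (0:ℝ) < (k:ℝ) by linarith)]
    exact mul_pos h1 h2
  refine ⟨1 / ((n:ℝ) * (1 + ((n:ℝ) - 1) * (k:ℝ))), one_div_pos.2 hden_pos, ?_⟩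
  intro lam η hlam hηdef hG f hf
  have hηmono : ∀ i j : Fin n, i ≤ j → η i ≤ η j := by
    intro i j hij
    rw [hηdef i, hηdef j]
    have := hlam i j hij
    linarith
  have hΓ : ∀ j : ℕ, 1 ≤ j → j ≤ k → 0 < ES η j (Finset.univ : Finset (Fin n)) := by
    intro j h1 h2
    exact hG j h1 h2
  have hCf : 0 < (1 / (k:ℝ)) * (esym n k η) ^ ((1:ℝ)/(k:ℝ) - 1) := by
    apply mul_pos
    · positivity
    · exact Real.rpow_pos_of_pos (hG k hk1 le_rfl) _
  set Cf : ℝ := (1 / (k:ℝ)) * (esym n k η) ^ ((1:ℝ)/(k:ℝ) - 1) with hCf_def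
  set i0 : Fin n := ⟨0, by omega⟩ with hi0
  rcases Nat.lt_or_ge k 2 with hk_small | hk_big
  · -- case k = 1
    have hk : k = 1 := by omega
    subst hk
    have hfi : ∀ i : Fin n, f i = Cf * ((n:ℝ) - 1) := by
      intro i
      rw [hf i]
      congr 1
      have h1 : ∀ l ∈ Finset.univ.erase i, esymDel n 0 η l = 1 := by
        intro l _
        exact ES_zero η (Finset.univ.erase l)
      rw [Finset.sum_congr rfl h1, Finset.sum_const, Finset.card_erase_of_mem (Finset.mem_univ i)]
      rw [Finset.card_univ, Fintype.card_fin]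
      rw [nsmul_eq_mul, mul_one, Nat.cast_sub (by omega)]
      norm_num
    have hsum : ∑ i : Fin n, f i = (n:ℝ) * (Cf * ((n:ℝ)-1)) := by
      rw [Finset.sum_congr rfl (fun i _ => hfi i), Finset.sum_const, Finset.card_univ,
        Fintype.card_fin, nsmul_eq_mul]
    rw [hsum, hfi]
    have hCfn : 0 ≤ Cf * ((n:ℝ)-1) := by
      apply mul_nonneg hCf.le
      linarith
    rw [div_mul_eq_mul_div, div_le_iff₀ hden_pos]
    push_cast
    nlinarith [mul_nonneg (mul_nonneg hCfn (by linarith : (0:ℝ) ≤ (n:ℝ)-1))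
      (by linarith : (0:ℝ) ≤ (n:ℝ))]
  · -- case k ≥ 2
    obtain ⟨k2, rfl⟩ : ∃ k2, k = k2 + 2 := ⟨k - 2, by omega⟩
    set i1 : Fin n := ⟨1, by omega⟩ with hi1
    have h01 : i0 ≠ i1 := by
      rw [hi0, hi1]
      simp [Fin.ext_iff]
    have hmin0 : ∀ i ∈ (Finset.univ : Finset (Fin n)), η i0 ≤ η i := by
      intro i _
      exact hηmono i0 i (by rw [hi0]; exact Fin.mk_le_of_le_val (by omega))
    have hmin1 : ∀ i ∈ (Finset.univ : Finset (Fin n)).erase i0, η i1 ≤ η i := by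
      intro i hi
      have hne : i ≠ i0 := Finset.ne_of_mem_erase hi
      have hval : 1 ≤ i.val := by
        by_contra hc
        push_neg at hc
        apply hne
        rw [hi0]
        exact Fin.ext (show i.val = 0 by omega)
      exact hηmono i1 i (by rw [hi1]; exact Fin.mk_le_of_le_val hval)
    have hcardu : (Finset.univ : Finset (Fin n)).card = n := by
      rw [Finset.card_univ, Fintype.card_fin]
    have hkey := key_lemma η Finset.univ k2 i0 i1 h01 (Finset.mem_univ i0) (Finset.mem_univ i1)
      (by rw [hcardu]; omega) hmin0 hmin1 hΓ
    rw [hcardu] at hkey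
    set CK : ℝ := ((n:ℝ) - 1) * ((k2:ℝ)+2) with hCK
    have hCKpos : 0 < CK := by rw [hCK]; nlinarith
    set S : Fin n → ℝ := fun l => ES η (k2+1) (Finset.univ.erase l) with hS
    have hSpos : ∀ l, 0 < S l := by
      intro l
      exact gamma_erase (k2+2) Finset.univ η (by omega) hΓ l (Finset.mem_univ l) (k2+1)
        (by omega) (by omega)
    set T0 : ℝ := ∑ l ∈ Finset.univ.erase i0, S l with hT0
    have h1mem : i1 ∈ Finset.univ.erase i0 :=
      Finset.mem_erase.2 ⟨fun h => h01 h.symm, Finset.mem_univ i1⟩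
    have hT0ge : S i1 ≤ T0 := by
      rw [hT0]
      exact Finset.single_le_sum (fun l _ => (hSpos l).le) h1mem
    have hT0pos : 0 < T0 := lt_of_lt_of_le (hSpos i1) hT0ge
    have hSi0 : S i0 ≤ CK * T0 := by
      calc S i0 ≤ CK * S i1 := hkey
        _ ≤ CK * T0 := by nlinarith [hT0ge, hCKpos]
    have hSSle : ∀ i : Fin n, ∑ l ∈ Finset.univ.erase i, S l ≤ (1 + CK) * T0 := by
      intro i
      have h1 : ∑ l ∈ Finset.univ.erase i, S l ≤ ∑ l : Fin n, S l := by
        apply Finset.sum_le_sum_of_subset_of_nonneg (Finset.erase_subset i Finset.univ)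
        intro l _ _
        exact (hSpos l).le
      have h2 : ∑ l : Fin n, S l = S i0 + T0 := by
        rw [hT0]
        exact (Finset.add_sum_erase Finset.univ S (Finset.mem_univ i0)).symm
      calc ∑ l ∈ Finset.univ.erase i, S l ≤ S i0 + T0 := by rw [← h2]; exact h1
        _ ≤ CK * T0 + T0 := by linarith [hSi0]
        _ = (1 + CK) * T0 := by ring
    have hfS : ∀ i : Fin n, f i = Cf * ∑ l ∈ Finset.univ.erase i, S l := by
      intro i
      rw [hf i]
      rfl
    have hfi0 : f i0 = Cf * T0 := by rw [hfS i0, hT0]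
    have hsum_le : ∑ i : Fin n, f i ≤ (n:ℝ) * (Cf * ((1 + CK) * T0)) := by
      calc ∑ i : Fin n, f i = ∑ i : Fin n, Cf * ∑ l ∈ Finset.univ.erase i, S l :=
            Finset.sum_congr rfl (fun i _ => hfS i)
        _ ≤ ∑ _i : Fin n, Cf * ((1 + CK) * T0) := by
            apply Finset.sum_le_sum
            intro i _
            exact mul_le_mul_of_nonneg_left (hSSle i) hCf.le
        _ = (n:ℝ) * (Cf * ((1 + CK) * T0)) := by
            rw [Finset.sum_const, Finset.card_univ, Fintype.card_fin, nsmul_eq_mul]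
    have hgoal : f (⟨0, by omega⟩ : Fin n) = Cf * T0 := hfi0
    rw [hgoal]
    have hCKeq : 1 + ((n:ℝ) - 1) * ((k2+2:ℕ):ℝ) = 1 + CK := by
      rw [hCK]; push_cast; ring
    rw [hCKeq]
    have hc_pos : (0:ℝ) < 1 / ((n:ℝ) * (1 + CK)) := by
      apply one_div_pos.2
      nlinarith [hCKpos]
    calc 1 / ((n:ℝ) * (1 + CK)) * ∑ i : Fin n, f i
        ≤ 1 / ((n:ℝ) * (1 + CK)) * ((n:ℝ) * (Cf * ((1 + CK) * T0))) := by
          exact mul_le_mul_of_nonneg_left hsum_le hc_pos.le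
      _ = Cf * T0 := by
          field_simp
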